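/- If F is a potential game with potential f and the protocol is of pairwise comparison class, then along solutions of the Erlang PC-EDM, d/dt f(x̄(t)) = ∑_{i=1}^n ∑_{j=1}^n x_{i,m}(t) φ_{i,j}(p(t)) (p_j(t) − p_i(t)) ≥ 0, i.e., the potential is nondecreasing. -/

import Mathlib

/-- If `F` is a potential game with potential `f` (`∇f = F`) and the protocol
is of pairwise comparison class, then along solutions of the Erlang PC-EDM,
`d/dt f(x̄(t)) = ∑ᵢⱼ x_{i,m} φ_{i,j}(p)(pⱼ − pᵢ) ≥ 0`. -/
theorem erlang_pc_edm_potential_nondecreasing {n m : ℕ} (hn : 0 < n) (hm : 0 < m)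
    (lam : ℝ) (hlam : 0 < lam)
    (F : (Fin n → ℝ) → (Fin n → ℝ))
    (f : (Fin n → ℝ) → ℝ) (hf : ContDiff ℝ 1 f)
    (hgrad : ∀ ξ i, fderiv ℝ f ξ (Pi.single i 1) = F ξ i)
    (φ : Fin n → Fin n → (Fin n → ℝ) → ℝ)
    (hφ0 : ∀ i j π, i ≠ j → 0 ≤ φ i j π)
    (hpos : ∀ i j (π : Fin n → ℝ), i ≠ j → π i < π j → 0 < φ i j π)
    (hzero : ∀ i j (π : Fin n → ℝ), i ≠ j → π j ≤ π i → φ i j π = 0)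
    (hrow : ∀ j (π : Fin n → ℝ), ∑ i, φ j i π = lam)
    (x : ℝ → Fin n → Fin m → ℝ)
    (xbar : ℝ → Fin n → ℝ) (hxbar : ∀ t i, xbar t i = ∑ l, x t i l)
    (p : ℝ → Fin n → ℝ) (hp : ∀ t, p t = F (xbar t))
    (hode1 : ∀ t i, HasDerivAt (fun s => x s i ⟨0, hm⟩)
      ((∑ j, x t j ⟨m - 1, Nat.sub_lt hm one_pos⟩ * φ j i (p t))
        - lam * x t i ⟨0, hm⟩) t)
    (hode2 : ∀ t i (l : Fin m), 0 < l.val →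
      HasDerivAt (fun s => x s i l)
        (lam * (x t i ⟨l.val - 1, lt_of_le_of_lt (Nat.sub_le _ _) l.isLt⟩
          - x t i l)) t)
    (hx0 : ∀ t i l, 0 ≤ x t i l) :
    ∀ t, HasDerivAt (fun s => f (xbar s))
        (∑ i, ∑ j, x t i ⟨m - 1, Nat.sub_lt hm one_pos⟩ * φ i j (p t)
          * (p t j - p t i)) t ∧
      0 ≤ ∑ i, ∑ j, x t i ⟨m - 1, Nat.sub_lt hm one_pos⟩ * φ i j (p t)
          * (p t j - p t i) := by
  obtain ⟨m', rfl⟩ : ∃ m', m = m' + 1 := ⟨m - 1, (Nat.succ_pred_eq_of_pos hm).symm⟩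
  intro t
  set M : Fin (m' + 1) := ⟨m' + 1 - 1, Nat.sub_lt hm one_pos⟩ with hM
  have hMval : (M : ℕ) = m' := rfl
  -- nonnegativity of each summand
  have hterm : ∀ i j, 0 ≤ x t i M * φ i j (p t) * (p t j - p t i) := by
    intro i j
    by_cases hij : i = j
    · subst hij; simp
    · by_cases hle : p t j ≤ p t i
      · rw [hzero i j (p t) hij hle]; simp
      · push_neg at hle
        exact mul_nonneg (mul_nonneg (hx0 t i M) (hφ0 i j (p t) hij))
          (by linarith)
  refine ⟨?_, Finset.sum_nonneg fun i _ => Finset.sum_nonneg fun j _ => hterm i j⟩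
  -- derivative of each coordinate
  set v : Fin n → ℝ :=
    fun i => (∑ j, x t j M * φ j i (p t)) - lam * x t i M with hv
  have hxbar' : HasDerivAt (fun s => xbar s) v t := by
    rw [hasDerivAt_pi]
    intro i
    set X : ℕ → ℝ := fun k => x t i ⟨min k m', by omega⟩ with hX
    have hXk : ∀ l : Fin (m' + 1), x t i l = X l.val := by
      intro l
      simp only [hX]
      congr 1
      exact Fin.ext (by simp [Nat.min_eq_left (Nat.lt_succ_iff.mp l.isLt)])
    set d : Fin (m' + 1) → ℝ := fun l =>
      if h : (l : ℕ) = 0 then (∑ j, x t j M * φ j i (p t)) - lam * x t i ⟨0, hm⟩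
      else lam * (x t i ⟨(l : ℕ) - 1, lt_of_le_of_lt (Nat.sub_le _ _) l.isLt⟩ - x t i l)
      with hd
    have hsum : HasDerivAt (fun s => ∑ l, x s i l) (∑ l, d l) t := by
      apply HasDerivAt.fun_sum
      intro l _
      by_cases h : (l : ℕ) = 0
      · have hl : l = ⟨0, hm⟩ := Fin.ext h
        rw [hd]; simp only [h, dif_pos]
        rw [hl]
        exact hode1 t i
      · rw [hd]; simp only [h, dif_neg, not_false_iff]
        exact hode2 t i l (Nat.pos_of_ne_zero h)
    have hdsum : ∑ l, d l = v i := by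
      show (∑ l, d l) = (∑ j, x t j M * φ j i (p t)) - lam * x t i M
      rw [Fin.sum_univ_succ]
      have h0 : d 0 = (∑ j, x t j M * φ j i (p t)) - lam * X 0 := by
        rw [hd]; simp only [Fin.val_zero, dif_pos]
        simp only [hXk, dite_true]
      have h1 : ∑ k : Fin m', d k.succ = lam * (X 0 - X m') := by
        have hds : ∀ k : Fin m', d k.succ = lam * (X k.val - X (k.val + 1)) := by
          intro k
          rw [hd]
          simp only [Fin.val_succ, Nat.succ_ne_zero, dif_neg, not_false_iff,
            Nat.add_sub_cancel, hXk]
        rw [Finset.sum_congr rfl fun k _ => hds k]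
        rw [Fin.sum_univ_eq_sum_range (fun k => lam * (X k - X (k + 1))) m']
        rw [← Finset.mul_sum, Finset.sum_range_sub' X]
      rw [h0, h1]
      have hM' : x t i M = X m' := hXk M
      rw [hM']
      ring
    have heq : (fun s => xbar s i) = fun s => ∑ l, x s i l := by
      funext s; exact hxbar s i
    rw [heq, ← hdsum]
    exact hsum
  -- chain rule
  have hdf : HasFDerivAt f (fderiv ℝ f (xbar t)) (xbar t) :=
    ((hf.differentiable one_ne_zero) (xbar t)).hasFDerivAt
  have hcomp : HasDerivAt (fun s => f (xbar s)) ((fderiv ℝ f (xbar t)) v) t :=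
    hdf.comp_hasDerivAt t hxbar'
  have hv_expand : (fderiv ℝ f (xbar t)) v = ∑ i, v i * p t i := by
    have hvsum : v = ∑ i, v i • (Pi.single i 1 : Fin n → ℝ) := by
      funext j
      rw [Finset.sum_apply]
      simp [Pi.single_apply]
    conv_lhs => rw [hvsum]
    rw [map_sum]
    simp only [map_smul, hgrad, smul_eq_mul]
    exact Finset.sum_congr rfl fun i _ => by rw [hp]
  have key : ∑ i, v i * p t i
      = ∑ i, ∑ j, x t i M * φ i j (p t) * (p t j - p t i) := by
    calc ∑ i, v i * p t i
        = (∑ i, ∑ j, x t j M * φ j i (p t) * p t i)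
          - ∑ i, ∑ j, x t i M * φ i j (p t) * p t i := by
          rw [← Finset.sum_sub_distrib]
          refine Finset.sum_congr rfl fun i _ => ?_
          rw [hv]
          rw [sub_mul, Finset.sum_mul]
          congr 1
          rw [← hrow i (p t), Finset.sum_mul, Finset.sum_mul]
          exact Finset.sum_congr rfl fun j _ => by ring
      _ = (∑ i, ∑ j, x t i M * φ i j (p t) * p t j)
          - ∑ i, ∑ j, x t i M * φ i j (p t) * p t i := by
          congr 1
          rw [Finset.sum_comm]
      _ = ∑ i, ∑ j, x t i M * φ i j (p t) * (p t j - p t i) := by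
          rw [← Finset.sum_sub_distrib]
          refine Finset.sum_congr rfl fun i _ => ?_
          rw [← Finset.sum_sub_distrib]
          exact Finset.sum_congr rfl fun j _ => by ring
  rw [hv_expand, key] at hcomp
  exact hcomp
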